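/- arXiv:0908.0116 — 2 statements merged into one kernel-verified Lean document; each statement's English description precedes it below -/
import Mathlib

section
/- For a cosimplicial unital ring R, equipped with the quasi-comonoid structure given by the Alexander–Whitney cup product x ∪ y = (∂^{m+1})^n x · (∂^0)^m y for x ∈ R^m, y ∈ R^n, the Maurer–Cartan set mc(R) = {ω ∈ R^1 : σ^0 ω = 1, ∂^1 ω = ω ∪ ω} is in natural bijection with the set 1 + {α ∈ N^1 R : dα + α ∪ α = 0}, where N R is the cosimplicial conormalization of R (so N^1 R = ker σ^0) and d = Σ(-1)^i ∂^i is the cochain differential. -/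
/-!
STATEMENT 3: For a cosimplicial unital ring `R` with the quasi-comonoid structure given by
the Alexander–Whitney cup product `x ∪ y = (∂^{m+1})^n x · (∂^0)^m y`, the Maurer–Cartan set
`mc(R) = {ω ∈ R^1 : σ^0 ω = 1, ∂^1 ω = ω ∪ ω}` is in natural bijection (via `α ↦ 1 + α`) with
`1 + {α ∈ N^1 R : dα + α ∪ α = 0}`, where `N^1 R = ker σ^0` and `d = Σ (-1)^i ∂^i`.

Here, for `α ∈ R^1`, `α ∪ α = ∂^2 α · ∂^0 α` and `d α = ∂^0 α - ∂^1 α + ∂^2 α`.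
-/

open CategoryTheory

theorem maurer_cartan_of_cosimplicial_ring (R : CosimplicialObject RingCat) :
    ∃ e : {α : R.obj (SimplexCategory.mk 1) //
            R.σ (0 : Fin 1) α = 0 ∧
            (R.δ (0 : Fin 3) α - R.δ (1 : Fin 3) α + R.δ (2 : Fin 3) α)
              + (R.δ (2 : Fin 3) α) * (R.δ (0 : Fin 3) α) = 0} ≃
          {ω : R.obj (SimplexCategory.mk 1) //
            R.σ (0 : Fin 1) ω = 1 ∧
            R.δ (1 : Fin 3) ω = (R.δ (2 : Fin 3) ω) * (R.δ (0 : Fin 3) ω)},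
      ∀ α, ((e α : R.obj (SimplexCategory.mk 1))) = 1 + (α : R.obj (SimplexCategory.mk 1)) := by
  refine ⟨⟨fun α => ⟨1 + α.1, ?_, ?_⟩, fun ω => ⟨ω.1 - 1, ?_, ?_⟩, ?_, ?_⟩, fun α => rfl⟩
  · simp [map_add, map_one, α.2.1]
  · have h := α.2.2
    simp only [map_add, map_one]
    linear_combination (norm := noncomm_ring) -h
  · simp [map_sub, map_one, ω.2.1]
  · have h := ω.2.2
    simp only [map_sub, map_one]
    linear_combination (norm := noncomm_ring) -h
  · intro α; ext; simp
  · intro ω; ext; simp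
end

section
/- Let G be a cosimplicial simplicial group arising as G = C^•(X, H) for a simplicial set X and a simplicial group H, i.e. C^n(X,H)_m = H_m^{X_n} with cosimplicial operations induced by the simplicial operations of X. Then the Maurer–Cartan set mc(G), consisting of families ω_n ∈ (G^{n+1})_n (elements of total degree matching) satisfying ∂_i ω_n = ∂^{i+1} ω_{n-1} for i > 0, ∂_0 ω_n = (∂^1 ω_{n-1})·(∂^0 ω_{n-1})^{-1}, σ_i ω_n = σ^{i+1} ω_{n+1}, and σ^0 ω_n = 1, is naturally isomorphic to Hom_{sSet}(X, W̄H). -/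
/-!
STATEMENT 16: Let `G = C•(X, H)` be the cosimplicial simplicial group of `H`-cochains on a
simplicial set `X` (`C^n(X,H)_m = H_m^{X_n}`).  Then the Maurer–Cartan set `mc(G)`,
consisting of families `ω_n ∈ (G^{n+1})_n` with
`∂_i ω_n = ∂^{i+1} ω_{n-1}` (`i > 0`), `∂_0 ω_n = (∂¹ω_{n-1})·(∂⁰ω_{n-1})⁻¹`,
`σ_i ω_n = σ^{i+1} ω_{n+1}`, and `σ⁰ ω_n = 1`, is naturally isomorphic to
`Hom_{sSet}(X, W̄H)`.
-/

universe u

/-- A simplicial set, by generators: faces `face n i : X (n+1) → X n` (`0 ≤ i ≤ n+1`) and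
degeneracies `degen n i : X n → X (n+1)` (`0 ≤ i ≤ n`) satisfying the simplicial
identities. -/
structure SimpSet (X : ℕ → Type u) where
  face : ∀ n i : ℕ, i ≤ n + 1 → X (n + 1) → X n
  degen : ∀ n i : ℕ, i ≤ n → X n → X (n + 1)
  face_face : ∀ (n i k : ℕ) (hik : i ≤ k) (hk : k ≤ n + 1) (x : X (n + 2)),
    face n i (by omega) (face (n + 1) (k + 1) (by omega) x) =
      face n k hk (face (n + 1) i (by omega) x)
  degen_degen : ∀ (n i j : ℕ) (hij : i ≤ j) (hj : j ≤ n) (x : X n),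
    degen (n + 1) i (by omega) (degen n j hj x) =
      degen (n + 1) (j + 1) (by omega) (degen n i (by omega) x)
  face_degen_lt : ∀ (n i k : ℕ) (hik : i ≤ k) (hk : k ≤ n) (x : X (n + 1)),
    face (n + 1) i (by omega) (degen (n + 1) (k + 1) (by omega) x) =
      degen n k (by omega) (face n i (by omega) x)
  face_degen_eq1 : ∀ (n i : ℕ) (hin : i ≤ n) (x : X n),
    face n i (by omega) (degen n i hin x) = x
  face_degen_eq2 : ∀ (n i : ℕ) (hin : i ≤ n) (x : X n),
    face n (i + 1) (by omega) (degen n i hin x) = x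
  face_degen_gt : ∀ (n j l : ℕ) (hjl : j + 1 ≤ l) (hl : l ≤ n + 1) (x : X (n + 1)),
    face (n + 1) (l + 1) (by omega) (degen (n + 1) j (by omega) x) =
      degen n j (by omega) (face n l (by omega) x)

/-- A simplicial group: a simplicial set of groups with all structure maps
homomorphisms. -/
structure SimpGrp (H : ℕ → Type u) [∀ n, Group (H n)] extends SimpSet H where
  face_mul : ∀ (n i : ℕ) (h : i ≤ n + 1) (x y : H (n + 1)),
    face n i h (x * y) = face n i h x * face n i h y
  degen_mul : ∀ (n i : ℕ) (h : i ≤ n) (x y : H n),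
    degen n i h (x * y) = degen n i h x * degen n i h y

variable {X : ℕ → Type u} {H : ℕ → Type u} [∀ n, Group (H n)]

/-- The Maurer–Cartan set of `C•(X, H)`: families `ω_n : X_{n+1} → H_n` satisfying the
Maurer–Cartan conditions of Definition `mcdefgp`. -/
def mcCochains (SX : SimpSet X) (SH : SimpGrp H) : Type u :=
  {ω : ∀ n, X (n + 1) → H n //
    -- `∂_i ω_n = ∂^{i+1} ω_{n-1}` for `i > 0`
    (∀ (m i : ℕ) (hi : 1 ≤ i) (h : i ≤ m + 1) (x : X (m + 2)),
      SH.face m i h (ω (m + 1) x) = ω m (SX.face (m + 1) (i + 1) (by omega) x)) ∧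
    -- `∂_0 ω_n = (∂¹ ω_{n-1}) · (∂⁰ ω_{n-1})⁻¹`
    (∀ (m : ℕ) (x : X (m + 2)),
      SH.face m 0 (by omega) (ω (m + 1) x) =
        ω m (SX.face (m + 1) 1 (by omega) x) * (ω m (SX.face (m + 1) 0 (by omega) x))⁻¹) ∧
    -- `σ_i ω_n = σ^{i+1} ω_{n+1}`
    (∀ (n i : ℕ) (h : i ≤ n) (x : X (n + 1)),
      SH.degen n i h (ω n x) = ω (n + 1) (SX.degen (n + 1) (i + 1) (by omega) x)) ∧
    -- `σ⁰ ω_n = 1`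
    (∀ (n : ℕ) (x : X n), ω n (SX.degen n 0 (by omega) x) = 1)}

/-- Level `n` of the classifying space `W̄H`: tuples `(g_{n-1}, …, g_0)` with
`g_j ∈ H_j`. -/
def Wbar (H : ℕ → Type u) (n : ℕ) : Type u := ∀ j : Fin n, H j

/-- Face maps of `W̄H`. -/
def WbarFace (SH : SimpGrp H) {n : ℕ} (i : ℕ) (hi : i ≤ n + 1)
    (v : Wbar H (n + 1)) : Wbar H n :=
  fun j =>
    if h1 : (j : ℕ) < n - i then v ⟨j, by omega⟩
    else if h2 : (j : ℕ) = n - i ∧ i ≤ n then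
      SH.face j 0 (by omega) (v ⟨(j : ℕ) + 1, by have := j.isLt; omega⟩) * v ⟨j, by omega⟩
    else
      SH.face j (i - (n - (j : ℕ))) (by have := j.isLt; omega)
        (v ⟨(j : ℕ) + 1, by have := j.isLt; omega⟩)

/-- Degeneracy maps of `W̄H`. -/
def WbarDegen (SH : SimpGrp H) {n : ℕ} (i : ℕ) (hi : i ≤ n)
    (v : Wbar H n) : Wbar H (n + 1) :=
  fun j =>
    if h1 : (j : ℕ) < n - i then
      cast (congrArg H rfl) (v ⟨j, by omega⟩)
    else if h2 : (j : ℕ) = n - i then (1 : H j)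
    else
      cast (congrArg H (by have := j.isLt; omega : (j : ℕ) - 1 + 1 = (j : ℕ)))
        (SH.degen ((j : ℕ) - 1) (i - (n - (j : ℕ)) - 1) (by have := j.isLt; omega)
          (v ⟨(j : ℕ) - 1, by have := j.isLt; omega⟩))

/-- The set of simplicial maps `X → W̄H`. -/
def mapsToWbar (SX : SimpSet X) (SH : SimpGrp H) : Type u :=
  {F : ∀ n, X n → Wbar H n //
    (∀ (n i : ℕ) (h : i ≤ n + 1) (x : X (n + 1)),
      F n (SX.face n i h x) = WbarFace SH i h (F (n + 1) x)) ∧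
    (∀ (n i : ℕ) (h : i ≤ n) (x : X n),
      F (n + 1) (SX.degen n i h x) = WbarDegen SH i h (F n x))}


namespace MCProofAux

/-- Cast along an equality of indices. -/
def xc {X : ℕ → Type u} {a b : ℕ} (h : a = b) (x : X a) : X b :=
  cast (congrArg X h) x

@[simp] lemma xc_rfl {X : ℕ → Type u} {a : ℕ} (h : a = a) (x : X a) :
    xc (X := X) h x = x := by
  simp [xc]

lemma xc_xc {X : ℕ → Type u} {a b c : ℕ} (h1 : a = b) (h2 : b = c) (x : X a) :
    xc (X := X) h2 (xc h1 x) = xc (h1.trans h2) x := by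
  subst h1; subst h2; rfl

variable {X : ℕ → Type u}

lemma face_idx_congr (S : SimpSet X) {n a b : ℕ} (h : a = b) (ha : a ≤ n + 1)
    (hb : b ≤ n + 1) (x : X (n + 1)) : S.face n a ha x = S.face n b hb x := by
  subst h; rfl

lemma degen_idx_congr (S : SimpSet X) {n a b : ℕ} (h : a = b) (ha : a ≤ n)
    (hb : b ≤ n) (x : X n) : S.degen n a ha x = S.degen n b hb x := by
  subst h; rfl

lemma xc_face0 (S : SimpSet X) {a b : ℕ} (h : a = b) (h' : a + 1 = b + 1)
    (x : X (a + 1)) :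
    S.face b 0 (Nat.zero_le _) (xc h' x) = xc h (S.face a 0 (Nat.zero_le _) x) := by
  subst h; simp

/-- Iterated `d₀`, peeling from the top. -/
def d0iter (S : SimpSet X) : ∀ (k m : ℕ), X (m + k) → X m
  | 0, _, x => x
  | (k+1), m, x => d0iter S k m (S.face (m + k) 0 (Nat.zero_le _) x)

lemma d0iter_face_le (S : SimpSet X) :
    ∀ (k m i : ℕ), i ≤ k → ∀ (h : i ≤ m + k + 1) (x : X (m + k + 1)),
      d0iter S k m (S.face (m + k) i h x) = d0iter S (k + 1) m x := by
  intro k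
  induction k with
  | zero =>
    intro m i hik h x
    interval_cases i
    rfl
  | succ k ih =>
    intro m i hik h x
    rcases Nat.eq_zero_or_pos i with rfl | hi
    · rfl
    · obtain ⟨i, rfl⟩ : ∃ i', i = i' + 1 := ⟨i - 1, by omega⟩
      show d0iter S k m (S.face (m + k) 0 _ (S.face (m + k + 1) (i + 1) _ x)) = _
      rw [S.face_face (m + k) 0 i (Nat.zero_le _) (by omega) x]
      · exact ih m i (by omega) (by omega) _

lemma d0iter_face_ge (S : SimpSet X) :
    ∀ (k m i : ℕ), k ≤ i → ∀ (h : i ≤ m + k + 1) (x : X (m + k + 1)),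
      d0iter S k m (S.face (m + k) i h x) =
        S.face m (i - k) (by omega) (d0iter S k (m + 1) (xc (by omega) x)) := by
  intro k
  induction k with
  | zero =>
    intro m i hik h x
    show S.face m i h x = S.face m (i - 0) _ (xc _ x)
    rw [xc_rfl]
    exact face_idx_congr S (by omega) _ _ _
  | succ k ih =>
    intro m i hik h x
    obtain ⟨i, rfl⟩ : ∃ i', i = i' + 1 := ⟨i - 1, by omega⟩
    show d0iter S k m (S.face (m + k) 0 _ (S.face (m + k + 1) (i + 1) _ x)) = _
    rw [S.face_face (m + k) 0 i (Nat.zero_le _) (by omega) x]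
    rw [ih m i (by omega) (by omega) _]
    show S.face m (i - k) _ (d0iter S k (m + 1) (xc _ (S.face (m + k + 1) 0 _ x))) =
      S.face m (i + 1 - (k + 1)) _ (d0iter S k (m + 1) (S.face (m + 1 + k) 0 _ (xc _ x)))
    rw [← xc_face0 S (by omega : m + k + 1 = m + 1 + k) (by omega) x]
    exact face_idx_congr S (by omega) _ _ _

lemma d0iter_degen_ge (S : SimpSet X) :
    ∀ (k m i : ℕ), k ≤ i → ∀ (h : i ≤ m + k) (x : X (m + k)),
      d0iter S k (m + 1) (xc (by omega) (S.degen (m + k) i h x)) =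
        S.degen m (i - k) (by omega) (d0iter S k m x) := by
  intro k
  induction k with
  | zero =>
    intro m i hik h x
    show xc _ (S.degen m i h x) = S.degen m (i - 0) _ x
    rw [xc_rfl]
    exact degen_idx_congr S (by omega) _ _ _
  | succ k ih =>
    intro m i hik h x
    obtain ⟨i, rfl⟩ : ∃ i', i = i' + 1 := ⟨i - 1, by omega⟩
    show d0iter S k (m + 1) (S.face (m + 1 + k) 0 _ (xc _ (S.degen (m + k + 1) (i + 1) _ x))) = _
    rw [xc_face0 S (by omega : m + k + 1 = m + 1 + k) (by omega)]
    rw [S.face_degen_lt (m + k) 0 i (Nat.zero_le _) (by omega) x]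
    rw [ih m i (by omega) (by omega) _]
    exact degen_idx_congr S (by omega) _ _ _

lemma d0iter_degen_le (S : SimpSet X) :
    ∀ (k m i : ℕ), i ≤ k → ∀ (h : i ≤ m + k) (x : X (m + k)),
      d0iter S (k + 1) m (S.degen (m + k) i h x) = d0iter S k m x := by
  intro k
  induction k with
  | zero =>
    intro m i hik h x
    interval_cases i
    show d0iter S 0 m (S.face m 0 _ (S.degen m 0 _ x)) = x
    rw [show S.face m 0 (Nat.zero_le _) (S.degen m 0 h x) = x from S.face_degen_eq1 m 0 h x]
    rfl
  | succ k ih =>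
    intro m i hik h x
    show d0iter S (k + 1) m (S.face (m + k + 1) 0 _ (S.degen (m + k + 1) i _ x)) = _
    rcases Nat.eq_zero_or_pos i with rfl | hi
    · rw [show S.face (m + k + 1) 0 (Nat.zero_le _) (S.degen (m + k + 1) 0 h x) = x from
        S.face_degen_eq1 (m + k + 1) 0 h x]
    · obtain ⟨i, rfl⟩ : ∃ i', i = i' + 1 := ⟨i - 1, by omega⟩
      rw [S.face_degen_lt (m + k) 0 i (Nat.zero_le _) (by omega) x]
      exact ih m i (by omega) (by omega) _

lemma d0iter_succ' (S : SimpSet X) (k m : ℕ) (x : X (m + k + 1)) :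
    d0iter S (k + 1) m x =
      S.face m 0 (Nat.zero_le _) (d0iter S k (m + 1) (xc (by omega) x)) := by
  rw [← d0iter_face_le S k m k le_rfl (by omega) x,
    d0iter_face_ge S k m k le_rfl (by omega) x]
  exact face_idx_congr S (by omega) _ _ _

variable {H : ℕ → Type u} [∀ n, Group (H n)]

/-- The simplicial map `X → W̄H` associated to a family `ω`. -/
def toW (SX : SimpSet X) (ω : ∀ n, X (n + 1) → H n) (n : ℕ) (x : X n) : Wbar H n :=
  fun j => ω j (d0iter SX (n - 1 - (j : ℕ)) ((j : ℕ) + 1)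
    (xc (by have := j.isLt; omega) x))

lemma d0iter_congr (S : SimpSet X) {k k' m : ℕ} (h : k = k') {a : ℕ}
    (ha : a = m + k) (ha' : a = m + k') (x : X a) :
    d0iter S k m (xc ha x) = d0iter S k' m (xc ha' x) := by
  subst h; rfl

lemma toW_eval (SX : SimpSet X) (ω : ∀ n, X (n + 1) → H n) (n k j : ℕ)
    (h : n = j + 1 + k) (x : X n) (hj : j < n) :
    toW SX ω n x ⟨j, hj⟩ = ω j (d0iter SX k (j + 1) (xc h x)) := by
  subst h
  show ω j (d0iter SX (j + 1 + k - 1 - j) (j + 1) (xc _ x)) = _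
  congr 1
  exact d0iter_congr SX (by omega) _ _ x

lemma toW_eval' (SX : SimpSet X) (ω : ∀ n, X (n + 1) → H n) (k j : ℕ)
    (x : X (j + 1 + k)) (hj : j < j + 1 + k) :
    toW SX ω (j + 1 + k) x ⟨j, hj⟩ = ω j (d0iter SX k (j + 1) x) := by
  rw [toW_eval SX ω _ k j rfl x hj, xc_rfl]

section WbarEval

variable (SH : SimpGrp H)

lemma wf_lt {n : ℕ} (i : ℕ) (hi : i ≤ n + 1) (v : Wbar H (n + 1)) (j : ℕ)
    (hj : j < n) (hc : j < n - i) :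
    WbarFace SH i hi v ⟨j, hj⟩ = v ⟨j, by omega⟩ := by
  unfold WbarFace
  rw [dif_pos hc]

lemma wf_eq {n : ℕ} (i : ℕ) (hi : i ≤ n + 1) (v : Wbar H (n + 1)) (j : ℕ)
    (hj : j < n) (hc : j = n - i) (hc2 : i ≤ n) :
    WbarFace SH i hi v ⟨j, hj⟩ =
      SH.face j 0 (Nat.zero_le _) (v ⟨j + 1, by omega⟩) * v ⟨j, by omega⟩ := by
  unfold WbarFace
  rw [dif_neg (show ¬ j < n - i by omega), dif_pos (show j = n - i ∧ i ≤ n from ⟨hc, hc2⟩)]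

lemma wf_gt {n : ℕ} (i : ℕ) (hi : i ≤ n + 1) (v : Wbar H (n + 1)) (j : ℕ)
    (hj : j < n) (hc : ¬ j < n - i) (hc2 : ¬ (j = n - i ∧ i ≤ n))
    (hidx : i - (n - j) ≤ j + 1) :
    WbarFace SH i hi v ⟨j, hj⟩ =
      SH.face j (i - (n - j)) hidx (v ⟨j + 1, by omega⟩) := by
  unfold WbarFace
  rw [dif_neg hc, dif_neg hc2]

lemma wd_lt {n : ℕ} (i : ℕ) (hi : i ≤ n) (v : Wbar H n) (j : ℕ)
    (hj : j < n + 1) (hc : j < n - i) :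
    WbarDegen SH i hi v ⟨j, hj⟩ = v ⟨j, by omega⟩ := by
  unfold WbarDegen
  rw [dif_pos hc]
  exact cast_eq _ _

lemma wd_eq {n : ℕ} (i : ℕ) (hi : i ≤ n) (v : Wbar H n) (j : ℕ)
    (hj : j < n + 1) (hc : j = n - i) :
    WbarDegen SH i hi v ⟨j, hj⟩ = 1 := by
  unfold WbarDegen
  rw [dif_neg (show ¬ j < n - i by omega), dif_pos (show j = n - i from hc)]

lemma wd_gt {n : ℕ} (i : ℕ) (hi : i ≤ n) (v : Wbar H n) (j : ℕ)
    (hj : j + 1 < n + 1) (hc : ¬ j + 1 < n - i) (hc2 : ¬ (j + 1 : ℕ) = n - i)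
    (hidx : i - (n - (j + 1)) - 1 ≤ j) (hjn : j < n) :
    WbarDegen SH i hi v ⟨j + 1, hj⟩ =
      SH.degen j (i - (n - (j + 1)) - 1) hidx (v ⟨j, hjn⟩) := by
  unfold WbarDegen
  rw [dif_neg hc, dif_neg hc2]
  exact cast_eq _ _

end WbarEval

section Forward

variable (SX : SimpSet X) (SH : SimpGrp H) (ω : ∀ n, X (n + 1) → H n)

lemma toW_face
    (hmc1 : ∀ (m i : ℕ), 1 ≤ i → ∀ (h : i ≤ m + 1) (x : X (m + 2)),
      SH.face m i h (ω (m + 1) x) = ω m (SX.face (m + 1) (i + 1) (by omega) x))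
    (hmc2 : ∀ (m : ℕ) (x : X (m + 2)),
      SH.face m 0 (Nat.zero_le _) (ω (m + 1) x) =
        ω m (SX.face (m + 1) 1 (by omega) x) *
          (ω m (SX.face (m + 1) 0 (by omega) x))⁻¹)
    (n i : ℕ) (h : i ≤ n + 1) (x : X (n + 1)) :
    toW SX ω n (SX.face n i h x) = WbarFace SH i h (toW SX ω (n + 1) x) := by
  funext j
  obtain ⟨j, hj⟩ := j
  obtain ⟨k, rfl⟩ : ∃ k, n = j + 1 + k := ⟨n - (j + 1), by omega⟩
  rw [toW_eval' SX ω k j _ hj]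
  -- common abbreviations
  have e1 : toW SX ω (j + 1 + k + 1) x ⟨j, by omega⟩ =
      ω j (d0iter SX (k + 1) (j + 1) x) :=
    toW_eval' SX ω (k + 1) j x (by omega)
  have e2 : toW SX ω (j + 1 + k + 1) x ⟨j + 1, by omega⟩ =
      ω (j + 1) (d0iter SX k (j + 1 + 1) (xc (by omega) x)) :=
    toW_eval SX ω (j + 1 + k + 1) k (j + 1) (by omega) x (by omega)
  rcases lt_trichotomy i (k + 1) with hik | rfl | hik
  · -- case `i ≤ k` : no Maurer–Cartan condition needed
    rw [wf_lt SH i h _ j hj (by omega),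
      d0iter_face_le SX k (j + 1) i (by omega) (by omega) x]
    exact (toW_eval' SX ω (k + 1) j x (by omega)).symm
  · -- case `i = k + 1`
    rw [wf_eq SH (k + 1) h _ j hj (by omega) (by omega), e1, e2,
      d0iter_face_ge SX k (j + 1) (k + 1) (by omega) (by omega) x,
      face_idx_congr SX (show k + 1 - k = 1 by omega) (by omega) (by omega),
      d0iter_succ' SX k (j + 1) x,
      hmc2 j (d0iter SX k (j + 1 + 1) (xc (by omega) x)),
      inv_mul_cancel_right]
  · -- case `i ≥ k + 2` : the remaining Maurer–Cartan face condition
    rw [wf_gt SH i h _ j hj (by omega) (by omega) (by omega), e2,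
      d0iter_face_ge SX k (j + 1) i (by omega) (by omega) x,
      face_idx_congr SX (show i - k = (i - k - 1) + 1 by omega) (by omega) (by omega),
      ← hmc1 j (i - k - 1) (by omega) (by omega)
        (d0iter SX k (j + 1 + 1) (xc (by omega) x))]
    exact face_idx_congr SH.toSimpSet (by omega) _ _ _

lemma toW_degen
    (hmc3 : ∀ (n i : ℕ) (h : i ≤ n) (x : X (n + 1)),
      SH.degen n i h (ω n x) = ω (n + 1) (SX.degen (n + 1) (i + 1) (by omega) x))
    (hmc4 : ∀ (n : ℕ) (x : X n), ω n (SX.degen n 0 (Nat.zero_le _) x) = 1)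
    (n i : ℕ) (h : i ≤ n) (x : X n) :
    toW SX ω (n + 1) (SX.degen n i h x) = WbarDegen SH i h (toW SX ω n x) := by
  funext j
  obtain ⟨j, hj⟩ := j
  rcases lt_trichotomy (j : ℕ) (n - i) with hc | hc | hc
  · -- case `j < n - i`
    obtain ⟨k, rfl⟩ : ∃ k, n = j + 1 + k := ⟨n - (j + 1), by omega⟩
    rw [wd_lt SH i h _ j hj hc]
    have eL : toW SX ω (j + 1 + k + 1) (SX.degen (j + 1 + k) i h x) ⟨j, hj⟩ =
        ω j (d0iter SX (k + 1) (j + 1) (SX.degen (j + 1 + k) i h x)) :=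
      toW_eval' SX ω (k + 1) j _ (by omega)
    rw [eL, d0iter_degen_le SX k (j + 1) i (by omega) (by omega) x]
    exact (toW_eval' SX ω k j x (by omega)).symm
  · -- case `j = n - i` : use `σ⁰ ω = 1`
    obtain rfl : n = j + i := by omega
    rw [wd_eq SH i h _ j hj hc,
      toW_eval SX ω (j + i + 1) i j (by omega) (SX.degen (j + i) i h x) hj,
      d0iter_degen_ge SX i j i le_rfl (by omega) x,
      degen_idx_congr SX (show i - i = 0 by omega) (by omega) (by omega)]
    exact hmc4 j _
  · -- case `j > n - i` : use the Maurer–Cartan degeneracy condition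
    obtain ⟨j, rfl⟩ : ∃ j', j = j' + 1 := ⟨j - 1, by omega⟩
    obtain ⟨k, rfl⟩ : ∃ k, n = j + 1 + k := ⟨n - (j + 1), by omega⟩
    rw [wd_gt SH i h _ j hj (by omega) (by omega) (by omega) (by omega),
      toW_eval' SX ω k j x (by omega)]
    have eL : toW SX ω (j + 1 + k + 1) (SX.degen (j + 1 + k) i h x) ⟨j + 1, hj⟩ =
        ω (j + 1) (d0iter SX k (j + 1 + 1)
          (xc (by omega) (SX.degen (j + 1 + k) i h x))) :=
      toW_eval SX ω (j + 1 + k + 1) k (j + 1) (by omega) _ (by omega)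
    rw [eL, d0iter_degen_ge SX k (j + 1) i (by omega) (by omega) x,
      degen_idx_congr SX (show i - k = i - k - 1 + 1 by omega) (by omega) (by omega),
      ← hmc3 j (i - k - 1) (by omega) (d0iter SX k (j + 1) x)]
    exact degen_idx_congr SH.toSimpSet (by omega) _ _ _

end Forward

section Backward

variable (SX : SimpSet X) (SH : SimpGrp H) (F : ∀ n, X n → Wbar H n)

/-- The family `ω` associated to a simplicial map `F : X → W̄H`. -/
def ofW (n : ℕ) (x : X (n + 1)) : H n := F (n + 1) x ⟨n, Nat.lt_succ_self n⟩

variable (hf : ∀ (n i : ℕ) (h : i ≤ n + 1) (x : X (n + 1)),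
    F n (SX.face n i h x) = WbarFace SH i h (F (n + 1) x))
  (hd : ∀ (n i : ℕ) (h : i ≤ n) (x : X n),
    F (n + 1) (SX.degen n i h x) = WbarDegen SH i h (F n x))

include hf in
lemma ofW_mc1 (m i : ℕ) (hi : 1 ≤ i) (h : i ≤ m + 1) (x : X (m + 2)) :
    SH.face m i h (ofW F (m + 1) x) =
      ofW F m (SX.face (m + 1) (i + 1) (by omega) x) := by
  have e := congrFun (hf (m + 1) (i + 1) (by omega) x) ⟨m, by omega⟩
  rw [wf_gt SH (i + 1) (by omega) (F (m + 2) x) m (by omega) (by omega)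
    (by omega) (by omega)] at e
  calc SH.face m i h (ofW F (m + 1) x)
      = SH.face m ((i + 1) - (m + 1 - m)) (by omega)
          (F (m + 2) x ⟨m + 1, by omega⟩) :=
        face_idx_congr SH.toSimpSet (by omega) _ _ _
    _ = F (m + 1) (SX.face (m + 1) (i + 1) (by omega) x) ⟨m, by omega⟩ := e.symm
    _ = ofW F m (SX.face (m + 1) (i + 1) (by omega) x) := rfl

include hf in
lemma ofW_mc2 (m : ℕ) (x : X (m + 2)) :
    SH.face m 0 (Nat.zero_le _) (ofW F (m + 1) x) =
      ofW F m (SX.face (m + 1) 1 (by omega) x) *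
        (ofW F m (SX.face (m + 1) 0 (by omega) x))⁻¹ := by
  have e1 := congrFun (hf (m + 1) 1 (by omega) x) ⟨m, by omega⟩
  rw [wf_eq SH 1 (by omega) (F (m + 2) x) m (by omega) (by omega) (by omega)] at e1
  have e0 := congrFun (hf (m + 1) 0 (by omega) x) ⟨m, by omega⟩
  rw [wf_lt SH 0 (by omega) (F (m + 2) x) m (by omega) (by omega)] at e0
  show SH.face m 0 (Nat.zero_le _) (F (m + 2) x ⟨m + 1, Nat.lt_succ_self _⟩) =
    F (m + 1) (SX.face (m + 1) 1 (by omega) x) ⟨m, Nat.lt_succ_self _⟩ *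
      (F (m + 1) (SX.face (m + 1) 0 (by omega) x) ⟨m, Nat.lt_succ_self _⟩)⁻¹
  rw [e1, e0, mul_inv_cancel_right]

include hd in
lemma ofW_mc3 (n i : ℕ) (h : i ≤ n) (x : X (n + 1)) :
    SH.degen n i h (ofW F n x) =
      ofW F (n + 1) (SX.degen (n + 1) (i + 1) (by omega) x) := by
  have e := congrFun (hd (n + 1) (i + 1) (by omega) x) ⟨n + 1, by omega⟩
  rw [wd_gt SH (i + 1) (by omega) (F (n + 1) x) n (by omega) (by omega)
    (by omega) (by omega) (by omega)] at e
  show SH.degen n i h (F (n + 1) x ⟨n, by omega⟩) =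
    F (n + 2) (SX.degen (n + 1) (i + 1) (by omega) x) ⟨n + 1, by omega⟩
  rw [e]
  exact degen_idx_congr SH.toSimpSet (by omega) _ _ _

include hd in
lemma ofW_mc4 (n : ℕ) (x : X n) :
    ofW F n (SX.degen n 0 (Nat.zero_le _) x) = 1 := by
  have e := congrFun (hd n 0 (Nat.zero_le _) x) ⟨n, by omega⟩
  rw [wd_eq SH 0 (Nat.zero_le _) (F n x) n (by omega) (by omega)] at e
  exact e

include hf in
lemma ofW_d0iter : ∀ (k j : ℕ) (x : X (j + 1 + k)) (hj : j < j + 1 + k),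
    F (j + 1 + k) x ⟨j, hj⟩ = ofW F j (d0iter SX k (j + 1) x) := by
  intro k
  induction k with
  | zero => intro j x hj; rfl
  | succ k ih =>
    intro j x hj
    have e := congrFun (hf (j + 1 + k) 0 (Nat.zero_le _) x) ⟨j, by omega⟩
    rw [wf_lt SH 0 (Nat.zero_le _) (F (j + 1 + k + 1) x) j (by omega) (by omega)] at e
    calc F (j + 1 + (k + 1)) x ⟨j, hj⟩
        = F (j + 1 + k) (SX.face (j + 1 + k) 0 (Nat.zero_le _) x) ⟨j, by omega⟩ :=
          e.symm
      _ = ofW F j (d0iter SX k (j + 1) (SX.face (j + 1 + k) 0 (Nat.zero_le _) x)) :=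
          ih j _ (by omega)
      _ = ofW F j (d0iter SX (k + 1) (j + 1) x) := rfl

end Backward

end MCProofAux

/-- `mc(C•(X,H)) ≅ Hom_{sSet}(X, W̄H)`. -/
theorem mc_cochains_iso_maps_to_classifying (SX : SimpSet X) (SH : SimpGrp H) :
    Nonempty (mcCochains SX SH ≃ mapsToWbar SX SH) := by
  open MCProofAux in
  refine ⟨{
    toFun := fun w => ⟨toW SX w.1,
      fun n i h x => toW_face SX SH w.1 w.2.1 w.2.2.1 n i h x,
      fun n i h x => toW_degen SX SH w.1 w.2.2.2.1 w.2.2.2.2 n i h x⟩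
    invFun := fun f => ⟨ofW f.1,
      fun m i hi h x => ofW_mc1 SX SH f.1 f.2.1 m i hi h x,
      fun m x => ofW_mc2 SX SH f.1 f.2.1 m x,
      fun n i h x => ofW_mc3 SX SH f.1 f.2.2 n i h x,
      fun n x => ofW_mc4 SX SH f.1 f.2.2 n x⟩
    left_inv := ?_
    right_inv := ?_ }⟩
  · rintro ⟨ω, hω⟩
    apply Subtype.ext
    funext n x
    exact toW_eval' SX ω 0 n x (by omega)
  · rintro ⟨F, hF⟩
    apply Subtype.ext
    funext n x j
    obtain ⟨j, hj⟩ := j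
    obtain ⟨k, rfl⟩ : ∃ k, n = j + 1 + k := ⟨n - (j + 1), by omega⟩
    show toW SX (ofW F) (j + 1 + k) x ⟨j, hj⟩ = F (j + 1 + k) x ⟨j, hj⟩
    rw [toW_eval' SX (ofW F) k j x hj]
    exact (ofW_d0iter SX SH F hF.1 k j x hj).symm
end
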